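/- Let 𝔾 be a group acting on a set X, let G ⊆ 𝔾 be a finite set, and let f₁, f₂ : X → ℂ be finitely supported functions. Then for every integer k ≥ 1 the quantity Σ_{g ∈ 𝔾} r_{(GG^{−1})^{2^{k−1}}}(g) Σ_{x ∈ X} f₂(x) conjugate(f₂(g·x)) is a nonnegative real number and | Σ_{g ∈ G} Σ_{x ∈ X} f₁(x) f₂(g·x) |^{2^k} ≤ ‖f₁‖₂^{2^k} ‖f₂‖₂^{2^k − 2} · Σ_{g ∈ 𝔾} r_{(GG^{−1})^{2^{k−1}}}(g) Σ_{x ∈ X} f₂(x) conjugate(f₂(g·x)). -/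

import Mathlib

/-- Alternating product `g₁ g₂⁻¹ g₃ g₄⁻¹ ⋯` (exponent `+1` at odd positions,
`−1` at even positions, 1-indexed). -/
def altProd {M : Type*} [Monoid M] [Inv M] {k : ℕ} (g : Fin k → M) : M :=
  (List.ofFn fun i : Fin k => if (i : ℕ) % 2 = 0 then g i else (g i)⁻¹).prod

/-- `r_{(GG⁻¹)^m}(g)`: the number of tuples `(g₁,…,g_{2m}) ∈ G^{2m}` with
`g₁g₂⁻¹g₃g₄⁻¹⋯g_{2m−1}g_{2m}⁻¹ = g`. -/
noncomputable def rAlt {G : Type*} [Group G] (Gs : Set G) (m : ℕ) (g : G) : ℕ :=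
  Nat.card {t : Fin (2 * m) → G // (∀ i, t i ∈ Gs) ∧ altProd t = g}

namespace Stmt10Aux

open Function

section Lists

variable {M : Type*} [Group M]

def altL : Bool → List M → M
  | _, [] => 1
  | b, a :: l => (if b then a else a⁻¹) * altL (!b) l

theorem altL_cons (b : Bool) (a : M) (l : List M) :
    altL b (a :: l) = (if b then a else a⁻¹) * altL (!b) l := rfl

theorem altL_append (b : Bool) (l₁ l₂ : List M) :
    altL b (l₁ ++ l₂) = altL b l₁ * altL (if l₁.length % 2 = 0 then b else !b) l₂ := by
  induction l₁ generalizing b with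
  | nil => simp [altL]
  | cons a l ih =>
      simp only [List.cons_append, altL_cons, ih (!b), List.length_cons, mul_assoc]
      congr 2
      rcases Nat.even_or_odd l.length with h | h
      · have h0 : l.length % 2 = 0 := Nat.even_iff.mp h
        have h1 : (l.length + 1) % 2 = 1 := by omega
        simp [h0, h1]
      · have h0 : l.length % 2 = 1 := Nat.odd_iff.mp h
        have h1 : (l.length + 1) % 2 = 0 := by omega
        simp [h0, h1]

theorem altL_inv (b : Bool) (l : List M) :
    (altL b l)⁻¹ = altL (if l.length % 2 = 0 then b else !b) l.reverse := by
  induction l generalizing b with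
  | nil => simp [altL]
  | cons a l ih =>
      rw [List.reverse_cons, altL_append, altL_cons, mul_inv_rev, ih (!b)]
      rcases Nat.even_or_odd l.length with h | h
      · have h0 : l.length % 2 = 0 := Nat.even_iff.mp h
        have h1 : (l.length + 1) % 2 = 1 := by omega
        cases b <;> simp [h0, h1, altL]
      · have h0 : l.length % 2 = 1 := Nat.odd_iff.mp h
        have h1 : (l.length + 1) % 2 = 0 := by omega
        cases b <;> simp [h0, h1, altL]

theorem altProd_eq_altL_aux (b : Bool) {m : ℕ} (u : Fin m → M) :
    (List.ofFn fun i : Fin m =>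
        if ((i : ℕ) % 2 == 0) = b then u i else (u i)⁻¹).prod = altL b (List.ofFn u) := by
  induction m generalizing b with
  | zero => simp [altL]
  | succ m ih =>
      rw [List.ofFn_succ, List.ofFn_succ (f := u), List.prod_cons, altL_cons]
      congr 1
      · cases b <;> simp
      · rw [← ih (!b) (fun i => u i.succ)]
        refine congrArg _ (congrArg _ (funext fun i => ?_))
        have h2 : ((i.succ : ℕ) % 2 == 0) = (!((i : ℕ) % 2 == 0)) := by
          simp only [Fin.val_succ]
          rcases Nat.even_or_odd (i : ℕ) with h | h
          · have h0 : (i : ℕ) % 2 = 0 := Nat.even_iff.mp h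
            have h1 : ((i : ℕ) + 1) % 2 = 1 := by omega
            simp [h0, h1]
          · have h0 : (i : ℕ) % 2 = 1 := Nat.odd_iff.mp h
            have h1 : ((i : ℕ) + 1) % 2 = 0 := by omega
            simp [h0, h1]
        rw [h2]
        cases b <;> simp

theorem altProd_eq_altL {m : ℕ} (u : Fin m → M) :
    altProd u = altL true (List.ofFn u) := by
  rw [← altProd_eq_altL_aux true u, altProd]
  simp only [beq_iff_eq]

theorem ofFn_rev {α : Type*} {n : ℕ} (f : Fin n → α) :
    (List.ofFn fun i : Fin n => f i.rev).reverse = List.ofFn f := by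
  apply List.ext_getElem
  · simp
  · intro i h1 h2
    have hn : i < n := by simpa using h2
    rw [List.getElem_reverse, List.getElem_ofFn, List.getElem_ofFn]
    congr 1
    ext
    simp only [Fin.rev, List.length_reverse, List.length_ofFn]
    omega

theorem altProd_split {m : ℕ} (u : Fin (m + m) → M) :
    altProd u = altProd (fun i : Fin m => u (Fin.castAdd m i)) *
      (altProd fun i : Fin m => u (Fin.natAdd m i.rev))⁻¹ := by
  rw [altProd_eq_altL, altProd_eq_altL, altProd_eq_altL, List.ofFn_add, altL_append,
    altL_inv, ofFn_rev (fun j => u (Fin.natAdd m j))]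
  simp
  rfl

theorem altProd_one (u : Fin 1 → M) : altProd u = u 0 := by
  simp [altProd, List.ofFn_succ]

theorem altProd_cast {n n' : ℕ} (h : n = n') (u : Fin n' → M) :
    altProd (fun i : Fin n => u (Fin.cast h i)) = altProd u := by
  subst h; rfl

end Lists

section Main

variable {G X : Type*} [Group G] [MulAction G X]

theorem support_smul_comp (f : X → ℂ) (hf : (support f).Finite) (g : G) :
    (support fun x => f (g • x)).Finite := by
  have : (support fun x => f (g • x)) = (fun x => g • x) ⁻¹' support f := by
    ext x; simp [Function.mem_support]
  rw [this]
  exact hf.preimage (MulAction.injective g).injOn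

theorem finsum_sum_swap {ι : Type*} (s : Finset ι) (F : ι → X → ℂ)
    (hF : ∀ i, (support (F i)).Finite) :
    ∑ i ∈ s, ∑ᶠ x, F i x = ∑ᶠ x, ∑ i ∈ s, F i x := by
  classical
  set T : Finset X := s.biUnion (fun i => (hF i).toFinset) with hT
  have h1 : ∀ i ∈ s, ∑ᶠ x, F i x = ∑ x ∈ T, F i x := by
    intro i hi
    refine finsum_eq_sum_of_support_subset _ ?_
    intro x hx
    simp only [hT, Finset.coe_biUnion, Set.mem_iUnion]
    exact ⟨i, hi, by simpa using hx⟩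
  rw [Finset.sum_congr rfl h1, Finset.sum_comm]
  refine (finsum_eq_sum_of_support_subset _ ?_).symm
  intro x hx
  simp only [Function.mem_support] at hx
  by_contra hxT
  exact hx (Finset.sum_eq_zero fun i hi => by
    by_contra hne
    exact hxT (by
      simp only [hT, Finset.coe_biUnion, Set.mem_iUnion]
      exact ⟨i, hi, by simpa using hne⟩))

theorem cs_finsum (a b : X → ℂ) (ha : (support a).Finite) (hb : (support b).Finite) :
    ‖∑ᶠ x, a x * b x‖ ≤
      Real.sqrt (∑ᶠ x, ‖a x‖ ^ 2) * Real.sqrt (∑ᶠ x, ‖b x‖ ^ 2) := by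
  classical
  set T : Finset X := (ha.union hb).toFinset with hT
  have hsub1 : support (fun x => a x * b x) ⊆ ↑T := by
    intro x hx
    simp only [Function.mem_support] at hx
    have : a x ≠ 0 := fun h => hx (by simp [h])
    simp [hT, Set.Finite.mem_toFinset]
    exact Or.inl this
  have hsa : support (fun x => ‖a x‖ ^ 2) ⊆ ↑T := by
    intro x hx
    simp only [Function.mem_support] at hx
    have : a x ≠ 0 := fun h => hx (by simp [h])
    simp [hT, Set.Finite.mem_toFinset]
    exact Or.inl this
  have hsb : support (fun x => ‖b x‖ ^ 2) ⊆ ↑T := by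
    intro x hx
    simp only [Function.mem_support] at hx
    have : b x ≠ 0 := fun h => hx (by simp [h])
    simp [hT, Set.Finite.mem_toFinset]
    exact Or.inr this
  rw [finsum_eq_sum_of_support_subset _ hsub1, finsum_eq_sum_of_support_subset _ hsa,
    finsum_eq_sum_of_support_subset _ hsb]
  calc ‖∑ x ∈ T, a x * b x‖ ≤ ∑ x ∈ T, ‖a x‖ * ‖b x‖ := by
        refine le_trans (norm_sum_le _ _) ?_
        simp [map_mul]
    _ ≤ Real.sqrt (∑ x ∈ T, ‖a x‖ ^ 2) *
          Real.sqrt (∑ x ∈ T, ‖b x‖ ^ 2) := by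
        rw [← Real.sqrt_mul (Finset.sum_nonneg fun i _ => sq_nonneg _)]
        rw [Real.le_sqrt (Finset.sum_nonneg fun i _ => mul_nonneg (norm_nonneg _)
          (norm_nonneg _))]
        · exact Finset.sum_mul_sq_le_sq_mul_sq T _ _
        · positivity

theorem Tg_eq (f : X → ℂ) (a b : G) :
    (∑ᶠ x, f x * (starRingEnd ℂ) (f ((a * b⁻¹) • x))) =
      ∑ᶠ x, f (b • x) * (starRingEnd ℂ) (f (a • x)) := by
  rw [← finsum_comp_equiv (MulAction.toPerm b)
    (f := fun x => f x * (starRingEnd ℂ) (f ((a * b⁻¹) • x)))]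
  refine finsum_congr fun x => ?_
  have : (a * b⁻¹) • (MulAction.toPerm b x) = a • x := by
    simp [MulAction.toPerm, smul_smul, inv_mul_cancel_right]
  rw [this]
  rfl

theorem rAlt_sum (Gs : Set G) (hG : Gs.Finite) (m : ℕ) (T : G → ℂ) :
    ∑ᶠ g : G, (rAlt Gs m g : ℂ) * T g =
      ∑ u ∈ Fintype.piFinset (fun _ : Fin (2 * m) => hG.toFinset), T (altProd u) := by
  classical
  set P := Fintype.piFinset (fun _ : Fin (2 * m) => hG.toFinset) with hP
  have hmem : ∀ u : Fin (2 * m) → G, u ∈ P ↔ ∀ i, u i ∈ Gs := by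
    intro u
    simp [hP, Fintype.mem_piFinset, Set.Finite.mem_toFinset]
  have hcard : ∀ g, rAlt Gs m g = (P.filter (fun u => altProd u = g)).card := by
    intro g
    have e : {t : Fin (2 * m) → G // (∀ i, t i ∈ Gs) ∧ altProd t = g} ≃
        {t : Fin (2 * m) → G // t ∈ P.filter fun u => altProd u = g} :=
      Equiv.subtypeEquivRight (fun u => by rw [Finset.mem_filter, hmem])
    rw [rAlt, Nat.card_congr e, Nat.card_eq_fintype_card, Fintype.card_coe]
  rw [Finset.sum_comp (fun g => T g) altProd]
  have hsupp : support (fun g => (rAlt Gs m g : ℂ) * T g) ⊆ ↑(P.image altProd) := by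
    intro g hg
    simp only [Function.mem_support] at hg
    have : rAlt Gs m g ≠ 0 := fun h => hg (by simp [h])
    rw [hcard] at this
    obtain ⟨u, hu⟩ := Finset.card_ne_zero.mp this |>.exists_mem
    simp only [Finset.mem_filter] at hu
    exact Finset.mem_coe.mpr (Finset.mem_image.mpr ⟨u, hu.1, hu.2⟩)
  rw [finsum_eq_sum_of_support_subset _ hsupp]
  refine Finset.sum_congr rfl fun g hg => ?_
  rw [hcard, nsmul_eq_mul]

theorem sum_split (Γ : Finset G) (m : ℕ) (W : G → ℂ) :
    ∑ u ∈ Fintype.piFinset (fun _ : Fin (2 * m) => Γ), W (altProd u) =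
      ∑ s ∈ Fintype.piFinset (fun _ : Fin m => Γ),
        ∑ r ∈ Fintype.piFinset (fun _ : Fin m => Γ),
          W (altProd s * (altProd r)⁻¹) := by
  classical
  have step1 : ∑ u ∈ Fintype.piFinset (fun _ : Fin (2 * m) => Γ), W (altProd u) =
      ∑ v ∈ Fintype.piFinset (fun _ : Fin (m + m) => Γ), W (altProd v) := by
    refine Finset.sum_nbij' (fun u => u ∘ Fin.cast (two_mul m).symm)
      (fun v => v ∘ Fin.cast (two_mul m)) ?_ ?_ ?_ ?_ ?_
    · intro u hu
      simp only [Fintype.mem_piFinset] at hu ⊢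
      exact fun i => hu _
    · intro v hv
      simp only [Fintype.mem_piFinset] at hv ⊢
      exact fun i => hv _
    · intro u _; funext i; simp
    · intro v _; funext i; simp
    · intro u _
      exact congrArg W (altProd_cast (two_mul m).symm u).symm
  rw [step1, ← Finset.sum_product']
  refine (Finset.sum_nbij' (fun v => (fun i : Fin m => v (Fin.castAdd m i),
      fun i : Fin m => v (Fin.natAdd m i.rev)))
    (fun p => Fin.append p.1 (p.2 ∘ Fin.rev)) ?_ ?_ ?_ ?_ ?_)
  · intro v hv
    simp only [Fintype.mem_piFinset, Finset.mem_product] at hv ⊢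
    exact ⟨fun i => hv _, fun i => hv _⟩
  · intro p hp
    simp only [Fintype.mem_piFinset, Finset.mem_product] at hp ⊢
    intro i
    refine Fin.addCases ?_ ?_ i
    · intro j; rw [Fin.append_left]; exact hp.1 j
    · intro j; rw [Fin.append_right]; exact hp.2 _
  · intro v _
    funext i
    refine Fin.addCases ?_ ?_ i
    · intro j; exact Fin.append_left _ _ j
    · intro j
      have h := Fin.append_right (fun i : Fin m => v (Fin.castAdd m i))
        ((fun i : Fin m => v (Fin.natAdd m i.rev)) ∘ Fin.rev) j
      simpa [Fin.rev_rev] using h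
  · intro p _
    ext i
    · exact Fin.append_left _ _ i
    · have h := Fin.append_right p.1 (p.2 ∘ Fin.rev) i.rev
      simpa [Fin.rev_rev] using h
  · intro v _
    exact congrArg W (altProd_split v)

noncomputable def phi (Γ : Finset G) (f : X → ℂ) (n : ℕ) (x : X) : ℂ :=
  ∑ u ∈ Fintype.piFinset (fun _ : Fin n => Γ), f (altProd u • x)

theorem support_phi (Γ : Finset G) (f : X → ℂ) (hf : (support f).Finite) (n : ℕ) :
    (support (phi Γ f n)).Finite := by
  have hsub : support (phi Γ f n) ⊆
      ⋃ u ∈ (Fintype.piFinset (fun _ : Fin n => Γ) : Finset (Fin n → G)),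
        support (fun x => f (altProd u • x)) := by
    intro x hx
    simp only [Function.mem_support, phi] at hx
    by_contra hc
    simp only [Set.mem_iUnion, Function.mem_support, not_exists, not_not] at hc
    exact hx (Finset.sum_eq_zero fun u hu => hc u hu)
  exact Set.Finite.subset (Set.Finite.biUnion (Finset.finite_toSet _)
    (fun u _ => support_smul_comp f hf _)) hsub

theorem Q_eq_phi2 (Γ : Finset G) (f : X → ℂ) (hf : (support f).Finite) (m : ℕ) :
    ∑ u ∈ Fintype.piFinset (fun _ : Fin (2 * m) => Γ),
        ∑ᶠ x, f x * (starRingEnd ℂ) (f (altProd u • x)) =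
      ∑ᶠ x, f x * (starRingEnd ℂ) (phi Γ f (2 * m) x) := by
  rw [finsum_sum_swap _ _ (fun u => Set.Finite.subset hf (support_mul_subset_left _ _))]
  refine finsum_congr fun x => ?_
  rw [phi, map_sum, Finset.mul_sum]

theorem Q_eq_phiphi (Γ : Finset G) (f : X → ℂ) (hf : (support f).Finite) (m : ℕ) :
    ∑ u ∈ Fintype.piFinset (fun _ : Fin (2 * m) => Γ),
        ∑ᶠ x, f x * (starRingEnd ℂ) (f (altProd u • x)) =
      ∑ᶠ x, phi Γ f m x * (starRingEnd ℂ) (phi Γ f m x) := by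
  rw [sum_split Γ m (fun g => ∑ᶠ x, f x * (starRingEnd ℂ) (f (g • x)))]
  have h1 : ∀ s r : Fin m → G,
      (∑ᶠ x, f x * (starRingEnd ℂ) (f ((altProd s * (altProd r)⁻¹) • x))) =
        ∑ᶠ x, f (altProd r • x) * (starRingEnd ℂ) (f (altProd s • x)) :=
    fun s r => Tg_eq f (altProd s) (altProd r)
  calc ∑ s ∈ Fintype.piFinset (fun _ : Fin m => Γ),
        ∑ r ∈ Fintype.piFinset (fun _ : Fin m => Γ),
          ∑ᶠ x, f x * (starRingEnd ℂ) (f ((altProd s * (altProd r)⁻¹) • x))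
      = ∑ p ∈ (Fintype.piFinset (fun _ : Fin m => Γ)) ×ˢ
            (Fintype.piFinset (fun _ : Fin m => Γ)),
          ∑ᶠ x, f (altProd p.2 • x) * (starRingEnd ℂ) (f (altProd p.1 • x)) := by
        rw [← Finset.sum_product']
        exact Finset.sum_congr rfl fun p _ => h1 p.1 p.2
    _ = ∑ᶠ x, ∑ p ∈ (Fintype.piFinset (fun _ : Fin m => Γ)) ×ˢ
            (Fintype.piFinset (fun _ : Fin m => Γ)),
          f (altProd p.2 • x) * (starRingEnd ℂ) (f (altProd p.1 • x)) := by
        refine finsum_sum_swap _ _ fun p => ?_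
        exact Set.Finite.subset (support_smul_comp f hf (altProd p.2))
          (support_mul_subset_left _ _)
    _ = ∑ᶠ x, phi Γ f m x * (starRingEnd ℂ) (phi Γ f m x) := by
        refine finsum_congr fun x => ?_
        rw [phi, map_sum, Finset.sum_mul_sum, Finset.sum_product]
        exact Finset.sum_comm

theorem Q_real (Γ : Finset G) (f : X → ℂ) (hf : (support f).Finite) (n : ℕ) :
    (∑ᶠ x, phi Γ f n x * (starRingEnd ℂ) (phi Γ f n x)) =
      (((∑ᶠ x, ‖phi Γ f n x‖ ^ 2 : ℝ)) : ℂ) := by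
  have h1 : ∀ x : X, phi Γ f n x * (starRingEnd ℂ) (phi Γ f n x) =
      ((‖phi Γ f n x‖ ^ 2 : ℝ) : ℂ) := fun x => by
    rw [Complex.mul_conj, Complex.sq_norm]
  rw [finsum_congr h1]
  refine (AddMonoidHom.map_finsum Complex.ofRealHom.toAddMonoidHom ?_).symm
  refine Set.Finite.subset (support_phi Γ f hf n) ?_
  intro x hx
  simp only [Function.mem_support] at hx ⊢
  intro h
  exact hx (by simp [h])

theorem phi_one (Γ : Finset G) (f : X → ℂ) (x : X) :
    phi Γ f 1 x = ∑ g ∈ Γ, f (g • x) := by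
  rw [phi]
  refine Finset.sum_nbij' (fun u => u 0) (fun g => fun _ => g) ?_ ?_ ?_ ?_ ?_
  · intro u hu
    simp only [Fintype.mem_piFinset] at hu
    exact hu 0
  · intro g hg
    simp only [Fintype.mem_piFinset]
    intro i; exact hg
  · intro u _
    funext i
    have : i = 0 := Subsingleton.elim _ _
    rw [this]
  · intro g _; rfl
  · intro u _
    rw [altProd_one]

end Main

end Stmt10Aux
open Function Stmt10Aux in
theorem stmt10 {G X : Type*} [Group G] [MulAction G X]
    (Gs : Set G) (hG : Gs.Finite) (f₁ f₂ : X → ℂ)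
    (h₁ : (Function.support f₁).Finite) (h₂ : (Function.support f₂).Finite)
    (k : ℕ) (hk : 1 ≤ k) :
    ∃ t : ℝ, 0 ≤ t ∧
      (∑ᶠ g : G, (rAlt Gs (2 ^ (k - 1)) g : ℂ) *
          ∑ᶠ x : X, f₂ x * (starRingEnd ℂ) (f₂ (g • x))) = (t : ℂ) ∧
      ‖∑ g ∈ hG.toFinset, ∑ᶠ x : X, f₁ x * f₂ (g • x)‖ ^ (2 ^ k) ≤
        Real.sqrt (∑ᶠ x : X, ‖f₁ x‖ ^ 2) ^ (2 ^ k) *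
          Real.sqrt (∑ᶠ x : X, ‖f₂ x‖ ^ 2) ^ (2 ^ k - 2) * t := by
  classical
  set Γ : Finset G := hG.toFinset with hΓ
  set N₁ : ℝ := ∑ᶠ x : X, ‖f₁ x‖ ^ 2 with hN₁
  set N₂ : ℝ := ∑ᶠ x : X, ‖f₂ x‖ ^ 2 with hN₂
  set q : ℕ → ℝ := fun n => ∑ᶠ x : X, ‖phi Γ f₂ n x‖ ^ 2 with hq
  have hqnn : ∀ n, 0 ≤ q n := fun n => finsum_nonneg fun x => sq_nonneg _
  have hN₂nn : 0 ≤ N₂ := finsum_nonneg fun x => sq_nonneg _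
  refine ⟨q (2 ^ (k - 1)), hqnn _, ?_, ?_⟩
  · rw [rAlt_sum Gs hG (2 ^ (k - 1))
        (fun g => ∑ᶠ x : X, f₂ x * (starRingEnd ℂ) (f₂ (g • x))),
      Q_eq_phiphi Γ f₂ h₂ (2 ^ (k - 1)), Q_real Γ f₂ h₂ (2 ^ (k - 1))]
  · have hstep : ∀ m : ℕ, q m ^ 2 ≤ N₂ * q (2 * m) := by
      intro m
      have e1 : ((q m : ℝ) : ℂ) = ∑ᶠ x, f₂ x * (starRingEnd ℂ) (phi Γ f₂ (2 * m) x) := by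
        rw [← Q_eq_phi2 Γ f₂ h₂ m, Q_eq_phiphi Γ f₂ h₂ m, Q_real Γ f₂ h₂ m]
      have hcs := cs_finsum f₂ (fun x => (starRingEnd ℂ) (phi Γ f₂ (2 * m) x)) h₂
        (by
          refine Set.Finite.subset (support_phi Γ f₂ h₂ (2 * m)) ?_
          intro x hx
          simp only [Function.mem_support] at hx ⊢
          intro h; exact hx (by simp [h]))
      have h2 : q m ≤ Real.sqrt N₂ *
          Real.sqrt (∑ᶠ x, ‖(starRingEnd ℂ) (phi Γ f₂ (2 * m) x)‖ ^ 2) := by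
        have habs : ‖((q m : ℝ) : ℂ)‖ = q m := by
          rw [Complex.norm_real, Real.norm_eq_abs, abs_of_nonneg (hqnn m)]
        rw [← habs, e1]
        exact hcs
      have h3 : (∑ᶠ x, ‖(starRingEnd ℂ) (phi Γ f₂ (2 * m) x)‖ ^ 2) = q (2 * m) :=
        finsum_congr fun x => by rw [Complex.norm_conj]
      rw [h3] at h2
      calc q m ^ 2 ≤ (Real.sqrt N₂ * Real.sqrt (q (2 * m))) ^ 2 :=
            pow_le_pow_left₀ (hqnn m) h2 2
        _ = N₂ * q (2 * m) := by rw [mul_pow, Real.sq_sqrt hN₂nn, Real.sq_sqrt (hqnn _)]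
    have hind : ∀ j : ℕ, q 1 ^ (2 ^ j) ≤ N₂ ^ (2 ^ j - 1) * q (2 ^ j) := by
      intro j
      induction j with
      | zero => simp
      | succ j ih =>
          have hp : 1 ≤ 2 ^ j := Nat.one_le_two_pow
          have e2 : (2 : ℕ) ^ (j + 1) = 2 ^ j * 2 := by rw [pow_succ]
          have e3 : 2 * 2 ^ j = 2 ^ (j + 1) := by rw [pow_succ]; ring
          calc q 1 ^ 2 ^ (j + 1) = (q 1 ^ 2 ^ j) ^ 2 := by rw [e2, pow_mul]
            _ ≤ (N₂ ^ (2 ^ j - 1) * q (2 ^ j)) ^ 2 :=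
                pow_le_pow_left₀ (pow_nonneg (hqnn 1) _) ih 2
            _ = N₂ ^ ((2 ^ j - 1) * 2) * q (2 ^ j) ^ 2 := by rw [mul_pow, ← pow_mul]
            _ ≤ N₂ ^ ((2 ^ j - 1) * 2) * (N₂ * q (2 ^ (j + 1))) := by
                refine mul_le_mul_of_nonneg_left ?_ (pow_nonneg hN₂nn _)
                have h4 := hstep (2 ^ j)
                rwa [e3] at h4
            _ = N₂ ^ (2 ^ (j + 1) - 1) * q (2 ^ (j + 1)) := by
                rw [← mul_assoc, ← pow_succ]
                congr 2
                omega
    have hbase : ‖∑ g ∈ Γ, ∑ᶠ x : X, f₁ x * f₂ (g • x)‖ ≤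
        Real.sqrt N₁ * Real.sqrt (q 1) := by
      have e1 : ∑ g ∈ Γ, ∑ᶠ x : X, f₁ x * f₂ (g • x) = ∑ᶠ x, f₁ x * phi Γ f₂ 1 x := by
        rw [finsum_sum_swap Γ (fun g x => f₁ x * f₂ (g • x))
          (fun g => Set.Finite.subset h₁ (support_mul_subset_left _ _))]
        refine finsum_congr fun x => ?_
        rw [phi_one, Finset.mul_sum]
      rw [e1]
      exact cs_finsum f₁ (phi Γ f₂ 1) h₁ (support_phi Γ f₂ h₂ 1)
    have hk2 : (2 : ℕ) ^ k = 2 ^ (k - 1) * 2 := by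
      conv_lhs => rw [← Nat.sub_add_cancel hk]
      rw [pow_succ]
    have h5 : ‖∑ g ∈ Γ, ∑ᶠ x : X, f₁ x * f₂ (g • x)‖ ^ 2 ^ k ≤
        (Real.sqrt N₁ * Real.sqrt (q 1)) ^ 2 ^ k :=
      pow_le_pow_left₀ (norm_nonneg _) hbase _
    have h6 : (Real.sqrt N₁ * Real.sqrt (q 1)) ^ 2 ^ k
        = Real.sqrt N₁ ^ 2 ^ k * q 1 ^ 2 ^ (k - 1) := by
      rw [mul_pow]
      congr 1
      rw [hk2, pow_mul', Real.sq_sqrt (hqnn 1)]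
    have h8 : N₂ ^ (2 ^ (k - 1) - 1) = Real.sqrt N₂ ^ (2 ^ k - 2) := by
      have hp : 1 ≤ 2 ^ (k - 1) := Nat.one_le_two_pow
      have h9 : (2 : ℕ) ^ k - 2 = (2 ^ (k - 1) - 1) * 2 := by omega
      rw [h9, pow_mul', Real.sq_sqrt hN₂nn]
    calc ‖∑ g ∈ Γ, ∑ᶠ x : X, f₁ x * f₂ (g • x)‖ ^ 2 ^ k
        ≤ Real.sqrt N₁ ^ 2 ^ k * q 1 ^ 2 ^ (k - 1) := by rw [← h6]; exact h5
      _ ≤ Real.sqrt N₁ ^ 2 ^ k * (N₂ ^ (2 ^ (k - 1) - 1) * q (2 ^ (k - 1))) :=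
          mul_le_mul_of_nonneg_left (hind (k - 1)) (pow_nonneg (Real.sqrt_nonneg _) _)
      _ = Real.sqrt N₁ ^ 2 ^ k * Real.sqrt N₂ ^ (2 ^ k - 2) * q (2 ^ (k - 1)) := by
          rw [h8, mul_assoc]
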